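/- Fix b∈ℕ, n∈ℕ and M∈ℕ. Let B and B̃ be two semi-infinite matrices with B_{rs}=0 and B̃_{rs}=0 whenever |r−s|>b, and suppose B_{rs}=B̃_{rs} for every pair (r,s) with |r−n|≤bM and |s−n|≤bM. Then C_m^{(n)}(B)=C_m^{(n)}(B̃) for every m=2,…,M. (Equivalently: for m≤M, C_m^{(n)}(B) does not depend on any entry B_{rs} with |r−n|>bM or |s−n|>bM.) -/

import Mathlib

noncomputable section

/-- Entrywise product of semi-infinite matrices (finite sums in the banded case). -/
def matMul (A B : ℕ → ℕ → ℝ) : ℕ → ℕ → ℝ := fun r s => ∑' k, A r k * B k s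

/-- Powers of a semi-infinite matrix. -/
def matPow (A : ℕ → ℕ → ℝ) : ℕ → ℕ → ℕ → ℝ
  | 0 => fun r s => if r = s then 1 else 0
  | m + 1 => matMul A (matPow A m)

/-- The coordinate projection `P_n` as a semi-infinite matrix. -/
def projMat (n : ℕ) : ℕ → ℕ → ℝ := fun r s => if r = s ∧ r < n then 1 else 0

/-- The matrix chain `B^{l_1} P_n B^{l_2} P_n ⋯ P_n B^{l_j}` for a list `[l_1, …, l_j]`. -/
def chainMat (B : ℕ → ℕ → ℝ) (n : ℕ) : List ℕ → (ℕ → ℕ → ℝ)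
  | [] => fun r s => if r = s then 1 else 0
  | [l] => matPow B l
  | l :: ls => matMul (matPow B l) (matMul (projMat n) (chainMat B n ls))

namespace CumLoc

def IsBand (a : ℕ) (A : ℕ → ℕ → ℝ) : Prop :=
  ∀ r s : ℕ, (a : ℤ) < |(r : ℤ) - (s : ℤ)| → A r s = 0

lemma matMul_eq_sum {A C : ℕ → ℕ → ℝ} {a : ℕ} (hA : IsBand a A) (r s : ℕ) :
    matMul A C r s = ∑ q ∈ Finset.range (r + a + 1), A r q * C q s := by
  apply tsum_eq_sum
  intro q hq
  rw [Finset.mem_range, Nat.lt_succ_iff, not_le] at hq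
  have h : (a : ℤ) < |(r : ℤ) - q| := by
    rw [abs_sub_comm, abs_of_nonneg (by push_cast; omega)]
    push_cast; omega
  rw [hA r q h, zero_mul]

lemma band_mul {A C : ℕ → ℕ → ℝ} {a c : ℕ} (hA : IsBand a A) (hC : IsBand c C) :
    IsBand (a + c) (matMul A C) := by
  intro r s h
  have hz : ∀ q : ℕ, A r q * C q s = 0 := by
    intro q
    by_cases h1 : (a : ℤ) < |(r : ℤ) - q|
    · rw [hA r q h1, zero_mul]
    · push_neg at h1
      have h2 : (c : ℤ) < |(q : ℤ) - s| := by
        have t := abs_sub_le (r : ℤ) q s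
        push_cast at h
        linarith
      rw [hC q s h2, mul_zero]
  show (∑' q, A r q * C q s) = 0
  exact (tsum_congr hz).trans tsum_zero

lemma band_pow {b : ℕ} {B : ℕ → ℕ → ℝ} (hB : IsBand b B) :
    ∀ l : ℕ, IsBand (b * l) (matPow B l) := by
  intro l
  induction l with
  | zero =>
    intro r s h
    have : r ≠ s := by
      intro e; subst e; simp at h
    simp [matPow, this]
  | succ l ih =>
    intro r s h
    have h' : ((b + b * l : ℕ) : ℤ) < |(r : ℤ) - s| := by
      push_cast at h ⊢; nlinarith
    exact band_mul hB ih r s h'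

lemma one_matMul (X : ℕ → ℕ → ℝ) :
    matMul (fun r s => if r = s then (1 : ℝ) else 0) X = X := by
  funext r s
  show (∑' q, (if r = q then (1:ℝ) else 0) * X q s) = X r s
  rw [tsum_eq_single r]
  · simp
  · intro q hq
    rw [if_neg (fun h => hq h.symm), zero_mul]

lemma matMul_assoc {A C : ℕ → ℕ → ℝ} (D : ℕ → ℕ → ℝ) {a c : ℕ}
    (hA : IsBand a A) (hC : IsBand c C) :
    matMul (matMul A C) D = matMul A (matMul C D) := by
  funext r s
  rw [matMul_eq_sum (band_mul hA hC) r s, matMul_eq_sum hA r s]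
  have hx : ∀ x, matMul A C r x = ∑ q ∈ Finset.range (r + a + 1), A r q * C q x :=
    fun x => matMul_eq_sum hA r x
  simp_rw [hx, Finset.sum_mul]
  rw [Finset.sum_comm]
  apply Finset.sum_congr rfl
  intro q hq
  rw [Finset.mem_range, Nat.lt_succ_iff] at hq
  rw [matMul_eq_sum hC q s, Finset.mul_sum]
  rw [show r + (a + c) + 1 = r + a + c + 1 by omega]
  rw [← Finset.sum_subset (Finset.range_mono (by omega : q + c + 1 ≤ r + a + c + 1))
      (fun x _ hx2 => ?_)]
  · exact Finset.sum_congr rfl fun x _ => mul_assoc _ _ _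
  · rw [Finset.mem_range, Nat.lt_succ_iff, not_le] at hx2
    rw [hC q x (by rw [abs_sub_comm, abs_of_nonneg (by push_cast; omega)]; push_cast; omega),
      mul_zero, zero_mul]

lemma pow_add {b : ℕ} {B : ℕ → ℕ → ℝ} (hB : IsBand b B) (a c : ℕ) :
    matPow B (a + c) = matMul (matPow B a) (matPow B c) := by
  induction a with
  | zero =>
    rw [Nat.zero_add]
    exact (one_matMul (matPow B c)).symm
  | succ a ih =>
    rw [show a + 1 + c = (a + c) + 1 by omega]
    show matMul B (matPow B (a + c)) = _
    rw [ih, ← matMul_assoc _ hB (band_pow hB a)]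
    rfl

lemma proj_matMul {n : ℕ} (X : ℕ → ℕ → ℝ) (q k : ℕ) :
    matMul (projMat n) X q k = if q < n then X q k else 0 := by
  show (∑' s, projMat n q s * X s k) = _
  rw [tsum_eq_single q]
  · by_cases h : q < n <;> simp [projMat, h]
  · intro s hs
    have : ¬(q = s ∧ q < n) := fun h => hs h.1.symm
    rw [projMat, if_neg this, zero_mul]




section Core
variable {b n M : ℕ} {B B' : ℕ → ℕ → ℝ}

lemma chain_eq_pow (hB : IsBand b B) :
    ∀ ls : List ℕ, ls ≠ [] → ∀ q k : ℕ, (q : ℤ) + b * ls.sum < n →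
      chainMat B n ls q k = matPow B ls.sum q k := by
  intro ls
  induction ls with
  | nil => intro h; exact absurd rfl h
  | cons l t ih =>
    intro _ q k hq
    cases t with
    | nil => simp [chainMat]
    | cons x t' =>
      have hres : chainMat B n (l :: x :: t')
          = matMul (matPow B l) (matMul (projMat n) (chainMat B n (x :: t'))) := rfl
      rw [hres, show (l :: x :: t').sum = l + (x :: t').sum from rfl, pow_add hB]
      show (∑' y, matPow B l q y * matMul (projMat n) (chainMat B n (x :: t')) y k)
          = ∑' y, matPow B l q y * matPow B (x :: t').sum y k
      refine tsum_congr fun y => ?_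
      by_cases hy : ((b * l : ℕ) : ℤ) < |(q : ℤ) - y|
      · rw [band_pow hB l q y hy, zero_mul, zero_mul]
      · push_neg at hy
        have hb1 := (abs_le.mp hy).1
        rw [Nat.cast_mul] at hb1
        rw [show (l :: x :: t').sum = l + (x :: t').sum from rfl, Nat.cast_add] at hq
        have hyn : (y : ℤ) + (b : ℤ) * ((x :: t').sum : ℕ) < n := by
          have hexp : (b : ℤ) * ((l : ℤ) + ((x :: t').sum : ℕ))
              = (b : ℤ) * l + (b : ℤ) * ((x :: t').sum : ℕ) := by ring
          linarith
        have hyn' : y < n := by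
          have h0 : (0 : ℤ) ≤ (b : ℤ) * ((x :: t').sum : ℕ) := by positivity
          exact_mod_cast lt_of_le_of_lt (le_add_of_nonneg_right h0) hyn
        rw [proj_matMul, if_pos hyn', ih (by simp) y k hyn]

lemma powAgree (hB : IsBand b B) (hB' : IsBand b B')
    (hag : ∀ r s : ℕ, |(r : ℤ) - n| ≤ (b : ℤ) * M → |(s : ℤ) - n| ≤ (b : ℤ) * M →
      B r s = B' r s) :
    ∀ a : ℕ, a ≤ M → ∀ p k : ℕ, (n : ℤ) - b * ((M : ℤ) - a) ≤ p → (k : ℤ) < n →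
      matPow B a p k = matPow B' a p k := by
  intro a
  induction a with
  | zero => intro _ p k _ _; rfl
  | succ a ih =>
    intro haM p k hp hk
    show (∑' q, B p q * matPow B a q k) = ∑' q, B' p q * matPow B' a q k
    refine tsum_congr fun q => ?_
    by_cases h1 : (b : ℤ) < |(p : ℤ) - q|
    · rw [hB p q h1, hB' p q h1, zero_mul, zero_mul]
    · push_neg at h1
      by_cases h2 : ((b * a : ℕ) : ℤ) < |(q : ℤ) - k|
      · rw [band_pow hB a q k h2, band_pow hB' a q k h2, mul_zero, mul_zero]
      · push_neg at h2
        obtain ⟨h1a, h1b⟩ := abs_le.mp h1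
        obtain ⟨h2a, h2b⟩ := abs_le.mp h2
        push_cast at h2a h2b hp
        have haM' : (a : ℤ) + 1 ≤ M := by exact_mod_cast haM
        have hb0 : (0 : ℤ) ≤ b := Int.ofNat_nonneg b
        have e1 : (b : ℤ) * ((M : ℤ) - (a + 1)) + b = b * ((M : ℤ) - a) := by ring
        have e2 : (b : ℤ) * ((M : ℤ) - a) + b * a = b * M := by ring
        have e3 : (b : ℤ) * ((a : ℤ) + 1) ≤ b * M :=
          mul_le_mul_of_nonneg_left haM' hb0
        have e4 : (0 : ℤ) ≤ b * ((M : ℤ) - (a + 1)) :=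
          mul_nonneg hb0 (by linarith)
        have hq' : (n : ℤ) - b * ((M : ℤ) - a) ≤ q := by linarith
        have hBq : B p q = B' p q := by
          apply hag
          · rw [abs_le]; constructor <;> nlinarith
          · rw [abs_le]; constructor <;> nlinarith
        rw [hBq, ih (by omega) q k hq' hk]

lemma powAgree' (hB : IsBand b B) (hB' : IsBand b B')
    (hag : ∀ r s : ℕ, |(r : ℤ) - n| ≤ (b : ℤ) * M → |(s : ℤ) - n| ≤ (b : ℤ) * M →
      B r s = B' r s) :
    ∀ a : ℕ, a ≤ M → ∀ r q : ℕ, (n : ℤ) - b * ((M : ℤ) - a) ≤ q →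
      (r : ℤ) ≤ (n : ℤ) - 1 + b * ((M : ℤ) - a) →
      matPow B a r q = matPow B' a r q := by
  intro a
  induction a with
  | zero => intro _ r q _ _; rfl
  | succ a ih =>
    intro haM r q hq hr
    show (∑' x, B r x * matPow B a x q) = ∑' x, B' r x * matPow B' a x q
    refine tsum_congr fun x => ?_
    by_cases h1 : (b : ℤ) < |(r : ℤ) - x|
    · rw [hB r x h1, hB' r x h1, zero_mul, zero_mul]
    · push_neg at h1
      by_cases h2 : ((b * a : ℕ) : ℤ) < |(x : ℤ) - q|
      · rw [band_pow hB a x q h2, band_pow hB' a x q h2, mul_zero, mul_zero]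
      · push_neg at h2
        obtain ⟨h1a, h1b⟩ := abs_le.mp h1
        obtain ⟨h2a, h2b⟩ := abs_le.mp h2
        push_cast at h2a h2b hq hr
        have haM' : (a : ℤ) + 1 ≤ M := by exact_mod_cast haM
        have hb0 : (0 : ℤ) ≤ b := Int.ofNat_nonneg b
        have e1 : (b : ℤ) * ((M : ℤ) - (a + 1)) + b = b * ((M : ℤ) - a) := by ring
        have e2 : (b : ℤ) * ((M : ℤ) - (a + 1)) + b * ((a : ℤ) + 1) = b * M := by ring
        have e3 : (b : ℤ) * ((a : ℤ) + 1) ≤ b * M :=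
          mul_le_mul_of_nonneg_left haM' hb0
        have e4 : (0 : ℤ) ≤ b * ((M : ℤ) - (a + 1)) :=
          mul_nonneg hb0 (by linarith)
        have hx' : (r : ℤ) ≤ (n : ℤ) - 1 + b * ((M : ℤ) - a) := by linarith
        have hq' : (n : ℤ) - b * ((M : ℤ) - a) ≤ q := by linarith
        have hxr : (x : ℤ) ≤ (n : ℤ) - 1 + b * ((M : ℤ) - a) := by linarith
        have hBx : B r x = B' r x := by
          apply hag
          · rw [abs_le]; constructor <;> nlinarith
          · rw [abs_le]; constructor <;> nlinarith
        rw [hBx, ih (by omega) x q hq' hxr]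

lemma mainAgree (hB : IsBand b B) (hB' : IsBand b B')
    (hag : ∀ r s : ℕ, |(r : ℤ) - n| ≤ (b : ℤ) * M → |(s : ℤ) - n| ≤ (b : ℤ) * M →
      B r s = B' r s) :
    ∀ ls : List ℕ, ls ≠ [] → ls.sum ≤ M → ∀ r k : ℕ, r < n → k < n →
      chainMat B n ls r k - matPow B ls.sum r k
        = chainMat B' n ls r k - matPow B' ls.sum r k := by
  intro ls
  induction ls with
  | nil => intro h; exact absurd rfl h
  | cons l t ih =>
    intro _ hsum r k hr hk
    cases t with
    | nil => simp [chainMat]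
    | cons x t' =>
      have hsC : (l :: x :: t').sum = l + (x :: t').sum := rfl
      have hsum' : l + (x :: t').sum ≤ M := by rw [← hsC]; exact hsum
      have key : ∀ (A : ℕ → ℕ → ℝ), IsBand b A →
          chainMat A n (l :: x :: t') r k - matPow A (l :: x :: t').sum r k
            = ∑ q ∈ Finset.range (r + b * l + 1),
                (matPow A l r q * (if q < n then chainMat A n (x :: t') q k else 0)
                  - matPow A l r q * matPow A (x :: t').sum q k) := by
        intro A hA
        rw [show chainMat A n (l :: x :: t')
            = matMul (matPow A l) (matMul (projMat n) (chainMat A n (x :: t'))) from rfl]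
        rw [hsC, pow_add hA, matMul_eq_sum (band_pow hA l) r k,
          matMul_eq_sum (band_pow hA l) r k, ← Finset.sum_sub_distrib]
        exact Finset.sum_congr rfl fun q _ => by rw [proj_matMul]
      rw [key B hB, key B' hB']
      apply Finset.sum_congr rfl
      intro q _
      by_cases h1 : ((b * l : ℕ) : ℤ) < |(r : ℤ) - q|
      · rw [band_pow hB l r q h1, band_pow hB' l r q h1]; simp
      · push_neg at h1
        have hb0 : (0 : ℤ) ≤ b := Int.ofNat_nonneg b
        have hlM : (l : ℤ) ≤ M := by exact_mod_cast le_trans (Nat.le_add_right _ _) hsum'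
        have hMl : (0 : ℤ) ≤ b * ((M : ℤ) - l) := mul_nonneg hb0 (by linarith)
        have hrn : (r : ℤ) < n := by exact_mod_cast hr
        have hkn : (k : ℤ) < n := by exact_mod_cast hk
        have hrcond : (r : ℤ) ≤ (n : ℤ) - 1 + b * ((M : ℤ) - l) := by linarith
        by_cases h2 : q < n
        · rw [if_pos h2, if_pos h2]
          by_cases h3 : (q : ℤ) + b * ((x :: t').sum : ℕ) < n
          · rw [chain_eq_pow hB _ (by simp) q k h3, chain_eq_pow hB' _ (by simp) q k h3]
            simp
          · push_neg at h3
            have hsle : ((x :: t').sum : ℤ) ≤ (M : ℤ) - l := by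
              have : ((x :: t').sum : ℤ) + l ≤ M := by exact_mod_cast by omega
              linarith
            have hbs : (b : ℤ) * ((x :: t').sum : ℕ) ≤ b * ((M : ℤ) - l) :=
              mul_le_mul_of_nonneg_left hsle hb0
            have hqcond : (n : ℤ) - b * ((M : ℤ) - l) ≤ q := by linarith
            have hpow : matPow B l r q = matPow B' l r q :=
              powAgree' hB hB' hag l (by omega) r q hqcond hrcond
            have hdel := ih (by simp) (by omega) q k h2 hk
            rw [hpow, ← mul_sub, ← mul_sub, hdel]
        · rw [if_neg h2, if_neg h2]
          push_neg at h2
          have hqn : (n : ℤ) ≤ q := by exact_mod_cast h2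
          have hpow : matPow B l r q = matPow B' l r q :=
            powAgree' hB hB' hag l (by omega) r q (by linarith) hrcond
          have hsM : (x :: t').sum ≤ M := by omega
          have hMs : (0 : ℤ) ≤ b * ((M : ℤ) - (x :: t').sum) :=
            mul_nonneg hb0 (by exact_mod_cast by omega : (0:ℤ) ≤ (M:ℤ) - ((x :: t').sum : ℕ))
          have hpow2 : matPow B (x :: t').sum q k = matPow B' (x :: t').sum q k :=
            powAgree hB hB' hag (x :: t').sum hsM q k (by linarith) hkn
          rw [hpow, hpow2]

end Core
end CumLoc

/-- `Tr(B^{l_1} P_n ⋯ B^{l_j} P_n) = ∑_{k<n} ⟨e_k, B^{l_1} P_n ⋯ B^{l_j} e_k⟩`. -/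
def trChain (B : ℕ → ℕ → ℝ) (n : ℕ) (l : List ℕ) : ℝ :=
  ∑ k ∈ Finset.range n, chainMat B n l k k

/-- Compositions of `m` into `j` positive parts. -/
def comps (j m : ℕ) : Finset (Fin j → ℕ) :=
  Finset.filter (fun l => (∀ i, 1 ≤ l i) ∧ ∑ i, l i = m)
    (Fintype.piFinset fun _ => Finset.range (m + 1))

/-- The quantity `C_m^{(n)}(B)` (with the `Tr B^m P_n` subtraction and `j` starting at `2`). -/
def Cmn (B : ℕ → ℕ → ℝ) (n m : ℕ) : ℝ :=
  ∑ j ∈ Finset.Icc 2 m, ((-1 : ℝ) ^ j / j) *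
    ∑ l ∈ comps j m,
      (trChain B n (List.ofFn l) - trChain B n [m]) / ((∏ i, Nat.factorial (l i) : ℕ) : ℝ)

/-- Lemma: `C_m^{(n)}(B)` for `m ≤ M` only depends on the entries `B_{rs}`
with `|r-n| ≤ bM` and `|s-n| ≤ bM`. -/
theorem cumulant_locality
    (b n M : ℕ) (B B' : ℕ → ℕ → ℝ)
    (hband : ∀ r s : ℕ, (b : ℤ) < |(r : ℤ) - (s : ℤ)| → B r s = 0)
    (hband' : ∀ r s : ℕ, (b : ℤ) < |(r : ℤ) - (s : ℤ)| → B' r s = 0)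
    (hagree : ∀ r s : ℕ, |(r : ℤ) - (n : ℤ)| ≤ (b : ℤ) * M → |(s : ℤ) - (n : ℤ)| ≤ (b : ℤ) * M →
      B r s = B' r s) :
    ∀ m : ℕ, 2 ≤ m → m ≤ M → Cmn B n m = Cmn B' n m := by
  intro m hm2 hmM
  unfold Cmn
  apply Finset.sum_congr rfl
  intro j hj
  rw [Finset.mem_Icc] at hj
  congr 1
  apply Finset.sum_congr rfl
  intro l hl
  congr 1
  rw [comps, Finset.mem_filter] at hl
  obtain ⟨-, hpos, hsuml⟩ := hl
  have hsum : (List.ofFn l).sum = m := by rw [List.sum_ofFn]; exact hsuml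
  have hne : (List.ofFn l) ≠ [] := by
    intro h
    have hlen : (List.ofFn l).length = j := List.length_ofFn
    rw [h] at hlen
    simp at hlen
    omega
  unfold trChain
  rw [← Finset.sum_sub_distrib, ← Finset.sum_sub_distrib]
  apply Finset.sum_congr rfl
  intro k hk
  have hkn : k < n := Finset.mem_range.mp hk
  rw [show chainMat B n [m] k k = matPow B m k k from rfl,
    show chainMat B' n [m] k k = matPow B' m k k from rfl, ← hsum]
  exact CumLoc.mainAgree hband hband' hagree (List.ofFn l) hne (by rw [hsum]; exact hmM)
    k k hkn hkn


end
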